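/- Let s ≥ 1 be a natural number and suppose ψ ∈ ℝ satisfies Ψ^{s−1}(t) ≤ ψ for all times t ≥ 0. Then Ψ^s(t) ≤ Ψ^s(0) + (ρ/μ)·ψ for all t with 0 ≤ t ≤ ψ/μ, and Ψ^s(t) ≤ (ρ/μ)·ψ for all t > ψ/μ. -/

import Mathlib

open Finset

variable {V : Type*}

/-- Node `v` satisfies the *fast condition* at time `t`. -/
def fastCond (G : SimpleGraph V) (L : V → ℝ → ℝ) (κ : ℝ) (v : V) (t : ℝ) : Prop :=
  ∃ s : ℕ, (∃ x, G.Adj v x ∧ (2 * (s : ℝ) + 1) * κ ≤ L x t - L v t) ∧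
    ∀ y, G.Adj v y → L v t - L y t ≤ (2 * (s : ℝ) + 1) * κ

/-- Node `v` satisfies the *slow condition* at time `t`. -/
def slowCond (G : SimpleGraph V) (L : V → ℝ → ℝ) (κ : ℝ) (v : V) (t : ℝ) : Prop :=
  ∃ s : ℕ, (∃ x, G.Adj v x ∧ 2 * (s : ℝ) * κ ≤ L v t - L x t) ∧
    ∀ y, G.Adj v y → L y t - L v t ≤ 2 * (s : ℝ) * κ

/-- `Ψ_v^s(t) = max_{w ∈ V} (L_w(t) - L_v(t) - 2sκ·d(v,w))`. -/
noncomputable def Psi [Fintype V] [Nonempty V] (G : SimpleGraph V) (L : V → ℝ → ℝ)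
    (κ : ℝ) (s : ℕ) (v : V) (t : ℝ) : ℝ :=
  univ.sup' univ_nonempty fun w => L w t - L v t - 2 * (s : ℝ) * κ * (G.dist v w)

/-- `Ψ^s(t) = max_{v ∈ V} Ψ_v^s(t)`. -/
noncomputable def PsiMax [Fintype V] [Nonempty V] (G : SimpleGraph V) (L : V → ℝ → ℝ)
    (κ : ℝ) (s : ℕ) (t : ℝ) : ℝ :=
  univ.sup' univ_nonempty fun v => Psi G L κ s v t

/-- `Ξ_v^s(t) = max_{w ∈ V} (L_v(t) - L_w(t) - (2s+1)κ·d(v,w))`. -/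
noncomputable def Xi [Fintype V] [Nonempty V] (G : SimpleGraph V) (L : V → ℝ → ℝ)
    (κ : ℝ) (s : ℕ) (v : V) (t : ℝ) : ℝ :=
  univ.sup' univ_nonempty fun w => L v t - L w t - (2 * (s : ℝ) + 1) * κ * (G.dist v w)

/-- The global skew `𝒢(t) = max_{v,w ∈ V} |L_v(t) - L_w(t)|`. -/
noncomputable def GSkew [Fintype V] [Nonempty V] (L : V → ℝ → ℝ) (t : ℝ) : ℝ :=
  univ.sup' univ_nonempty fun p : V × V => |L p.1 t - L p.2 t|

section AuxGCS

open Set Filter Topology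

/-- Continuity of a finite `sup'` of continuous real functions. -/
lemma continuous_finset_sup'_aux {ι : Type*} {s : Finset ι} (hs : s.Nonempty) {f : ι → ℝ → ℝ}
    (hf : ∀ i, Continuous (f i)) : Continuous fun u => s.sup' hs fun i => f i u := by
  induction hs using Finset.Nonempty.cons_induction with
  | singleton a => simpa using hf a
  | cons a s h hs ih =>
    have he : (fun u => (Finset.cons a s h).sup' (Finset.cons_nonempty h) fun i => f i u)
        = fun u => max (f a u) (s.sup' hs fun i => f i u) := by
      funext u
      rw [Finset.sup'_cons hs]
    rw [he]
    exact (hf a).max ih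

/-- A Gronwall-type "first crossing" estimate for a finite max of differentiable functions. -/
lemma sup'_crossing {ι : Type*} [Fintype ι] [Nonempty ι] (F : ι → ℝ → ℝ)
    (hFd : ∀ i, Differentiable ℝ (F i)) (a b Z σ : ℝ) (hab : a ≤ b)
    (hZ : (univ.sup' univ_nonempty fun i => F i a) ≤ Z)
    (key : ∀ c, c ∈ Set.Ioo a b →
      Z + σ * (c - a) < (univ.sup' univ_nonempty fun i => F i c) →
      ∀ i, F i c = (univ.sup' univ_nonempty fun i => F i c) → deriv (F i) c ≤ σ) :
    (univ.sup' univ_nonempty fun i => F i b) ≤ Z + σ * (b - a) := by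
  set M : ℝ → ℝ := fun u => univ.sup' univ_nonempty fun i => F i u with hM
  have hMcont : Continuous M :=
    continuous_finset_sup'_aux univ_nonempty fun i => (hFd i).continuous
  have main : ∀ ε > 0, ∀ δ > 0, M b ≤ Z + (σ + ε) * (b - a) + δ := by
    intro ε hε δ hδ
    by_contra hcon
    push_neg at hcon
    set line : ℝ → ℝ := fun u => Z + (σ + ε) * (u - a) + δ with hline
    have hlinecont : Continuous line := by fun_prop
    set B : Set ℝ := {u | u ∈ Set.Icc a b ∧ line u < M u} with hB
    have hbB : b ∈ B := ⟨⟨hab, le_rfl⟩, hcon⟩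
    have hBne : B.Nonempty := ⟨b, hbB⟩
    have hBbdd : BddBelow B := ⟨a, fun x hx => hx.1.1⟩
    set c := sInf B with hc
    have hca : a ≤ c := le_csInf hBne fun x hx => hx.1.1
    have hcble : c ≤ b := csInf_le hBbdd hbB
    have hMa : M a < Z + δ / 2 := by linarith
    have hev : ∀ᶠ u in 𝓝 a, M u < Z + δ / 2 :=
      (hMcont.continuousAt (x := a)).eventually_lt_const hMa
    obtain ⟨h₁, hh₁, hball⟩ := Metric.eventually_nhds_iff.mp hev
    obtain ⟨K, hKpos, hKabs⟩ : ∃ K : ℝ, 0 < K ∧ |σ + ε| ≤ K :=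
      ⟨|σ + ε| + 1, by positivity, by linarith [abs_nonneg (σ + ε)]⟩
    obtain ⟨h₀, hh₀pos, h₀K⟩ : ∃ h₀ : ℝ, 0 < h₀ ∧ K * h₀ = δ / 2 :=
      ⟨δ / (2 * K), by positivity, by field_simp⟩
    have hac : a < c := by
      have hlb : a + min h₀ (h₁ / 2) ≤ c := by
        apply le_csInf hBne
        intro u hu
        by_contra hult
        push_neg at hult
        have hua : a ≤ u := hu.1.1
        have h2 : u - a < h₀ := by
          have := min_le_left h₀ (h₁ / 2); linarith
        have h3 : dist u a < h₁ := by
          rw [Real.dist_eq, abs_of_nonneg (by linarith)]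
          have := min_le_right h₀ (h₁ / 2); linarith
        have h4 : M u < Z + δ / 2 := hball h3
        have h6 : |(σ + ε) * (u - a)| ≤ K * (u - a) := by
          rw [abs_mul, abs_of_nonneg (by linarith : (0:ℝ) ≤ u - a)]
          exact mul_le_mul_of_nonneg_right hKabs (by linarith)
        have h7 : -(K * (u - a)) ≤ (σ + ε) * (u - a) := (abs_le.mp h6).1
        have h8 : K * (u - a) ≤ K * h₀ := mul_le_mul_of_nonneg_left h2.le hKpos.le
        have h5 : Z + δ / 2 ≤ line u := by
          show Z + δ / 2 ≤ Z + (σ + ε) * (u - a) + δ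
          linarith
        have hlm : line u < M u := hu.2
        exact lt_irrefl (M u) (h4.trans_le (h5.trans hlm.le))
      have : 0 < min h₀ (h₁ / 2) := lt_min hh₀pos (by linarith)
      linarith
    have hlow : ∀ u, a ≤ u → u < c → M u ≤ line u := by
      intro u h1 h2
      by_contra h
      push_neg at h
      have : u ∈ B := ⟨⟨h1, le_trans h2.le hcble⟩, h⟩
      exact absurd (csInf_le hBbdd this) (not_le.mpr h2)
    have hMcle : M c ≤ line c := by
      have hclos : c ∈ closure (Set.Ico a c) := by
        rw [closure_Ico (ne_of_lt hac)]
        exact ⟨hca, le_rfl⟩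
      haveI hnb : (𝓝[Set.Ico a c] c).NeBot := mem_closure_iff_nhdsWithin_neBot.mp hclos
      have htend : Filter.Tendsto (fun u => line u - M u) (𝓝[Set.Ico a c] c)
          (𝓝 (line c - M c)) :=
        ((hlinecont.sub hMcont).continuousAt).continuousWithinAt
      have hevge : ∀ᶠ u in 𝓝[Set.Ico a c] c, (0:ℝ) ≤ line u - M u := by
        filter_upwards [eventually_mem_nhdsWithin] with u hu
        exact sub_nonneg.mpr (hlow u hu.1 hu.2)
      have hge := ge_of_tendsto htend hevge
      exact sub_nonneg.mp hge
    have hcnotB : c ∉ B := fun h => absurd h.2 (not_lt.mpr hMcle)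
    have hcb : c < b := by
      rcases lt_or_eq_of_le hcble with h | h
      · exact h
      · exact absurd (h ▸ hbB) hcnotB
    have key' : ∀ i : ι, ∀ᶠ u in 𝓝[>] c, F i u ≤ line u := by
      intro i
      have hFic : F i c ≤ M c := Finset.le_sup' (fun j => F j c) (mem_univ i)
      rcases lt_or_eq_of_le (le_trans hFic hMcle) with hlt | heq
      · have : ∀ᶠ u in 𝓝 c, F i u < line u :=
          ContinuousAt.eventually_lt ((hFd i).continuous.continuousAt)
            (hlinecont.continuousAt) hlt
        exact (this.filter_mono nhdsWithin_le_nhds).mono fun u hu => hu.le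
      · have hMceq : M c = line c := le_antisymm hMcle (heq ▸ hFic)
        have hatt : F i c = M c := by rw [hMceq, heq]
        have hstate : Z + σ * (c - a) < M c := by
          rw [hMceq]
          show Z + σ * (c - a) < Z + (σ + ε) * (c - a) + δ
          nlinarith [mul_nonneg hε.le (sub_nonneg.mpr hca)]
        have hderiv : deriv (F i) c ≤ σ := key c ⟨hac, hcb⟩ hstate i hatt
        have hd : HasDerivAt (F i) (deriv (F i) c) c := ((hFd i) c).hasDerivAt
        have hslope : Filter.Tendsto (slope (F i) c) (𝓝[≠] c) (𝓝 (deriv (F i) c)) :=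
          hasDerivAt_iff_tendsto_slope.mp hd
        have hmono : 𝓝[>] c ≤ 𝓝[≠] c :=
          nhdsWithin_mono c fun y hy => Set.mem_compl_singleton_iff.mpr (ne_of_gt hy)
        have hev1 : ∀ᶠ u in 𝓝[>] c, slope (F i) c u < σ + ε :=
          (hslope.mono_left hmono).eventually_lt_const (by linarith)
        filter_upwards [hev1, eventually_mem_nhdsWithin] with u hu1 hu2
        have hcu : c < u := hu2
        rw [slope_def_field] at hu1
        have hlt2 : F i u - F i c < (σ + ε) * (u - c) := by
          have := (div_lt_iff₀ (by linarith : (0:ℝ) < u - c)).mp hu1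
          linarith
        have hlineu : line u = line c + (σ + ε) * (u - c) := by
          show Z + (σ + ε) * (u - a) + δ = (Z + (σ + ε) * (c - a) + δ) + (σ + ε) * (u - c)
          ring
        rw [hlineu]
        have hFle : F i c ≤ line c := heq.le
        have hstep : F i u ≤ F i c + (σ + ε) * (u - c) := by linarith
        calc F i u ≤ F i c + (σ + ε) * (u - c) := hstep
        _ ≤ line c + (σ + ε) * (u - c) := by linarith
    have hall : ∀ᶠ u in 𝓝[>] c, ∀ i, F i u ≤ line u := eventually_all.mpr key'
    obtain ⟨u₂, hu₂, hsub⟩ := mem_nhdsGT_iff_exists_Ioo_subset.mp hall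
    obtain ⟨r, hrB, hrlt⟩ := exists_lt_of_csInf_lt hBne
      (show sInf B < min u₂ b from lt_min hu₂ hcb)
    have hcr : c ≤ r := csInf_le hBbdd hrB
    have hcr' : c < r := lt_of_le_of_ne hcr fun h => hcnotB (h ▸ hrB)
    have hrIoo : r ∈ Set.Ioo c u₂ := ⟨hcr', lt_of_lt_of_le hrlt (min_le_left _ _)⟩
    have hMr : M r ≤ line r := by
      apply Finset.sup'_le
      intro i _
      exact hsub hrIoo i
    exact absurd hMr (not_le.mpr hrB.2)
  have step1 : ∀ ε > 0, M b ≤ Z + (σ + ε) * (b - a) := fun ε hε =>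
    le_of_forall_pos_le_add fun δ hδ => main ε hε δ hδ
  apply le_of_forall_pos_le_add
  intro ε' hε'
  have hba : 0 ≤ b - a := by linarith
  have hst := step1 (ε' / (b - a + 1)) (by positivity)
  have hkey : (ε' / (b - a + 1)) * (b - a) ≤ ε' := by
    rw [div_mul_eq_mul_div, div_le_iff₀ (by linarith)]
    nlinarith
  nlinarith [hst]

end AuxGCS

section MainAux

open Set Filter Topology

variable [Fintype V] [Nonempty V]

/-- The "depth" of `v`: `max_z (L_v - L_z - (2s-1)κ d(v,z))`. -/
noncomputable def dpt (G : SimpleGraph V) (L : V → ℝ → ℝ)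
    (κ : ℝ) (s : ℕ) (v : V) (t : ℝ) : ℝ :=
  univ.sup' univ_nonempty fun z => L v t - L z t - (2 * (s : ℝ) - 1) * κ * (G.dist v z)

variable {G : SimpleGraph V} {L : V → ℝ → ℝ} {κ ρ μ : ℝ} {s : ℕ}

lemma psi_nonneg (v : V) (t : ℝ) : 0 ≤ Psi G L κ s v t := by
  have h := Finset.le_sup' (fun w => L w t - L v t - 2 * (s : ℝ) * κ * (G.dist v w)) (mem_univ v)
  rw [SimpleGraph.dist_self] at h
  simp only [Nat.cast_zero, mul_zero, sub_zero, sub_self] at h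
  exact h

lemma dpt_nonneg (v : V) (t : ℝ) : 0 ≤ dpt G L κ s v t := by
  have h := Finset.le_sup'
    (fun z => L v t - L z t - (2 * (s : ℝ) - 1) * κ * (G.dist v z)) (mem_univ v)
  rw [SimpleGraph.dist_self] at h
  simp only [Nat.cast_zero, mul_zero, sub_zero, sub_self] at h
  exact h

lemma psi_le_psiMax (v : V) (t : ℝ) : Psi G L κ s v t ≤ PsiMax G L κ s t :=
  Finset.le_sup' (fun u => Psi G L κ s u t) (mem_univ v)

lemma psiMax_nonneg (t : ℝ) : 0 ≤ PsiMax G L κ s t := by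
  obtain ⟨v⟩ := ‹Nonempty V›
  exact le_trans (psi_nonneg v t) (psi_le_psiMax v t)

lemma psi_continuous (hdiff : ∀ v, Differentiable ℝ (L v)) (v : V) :
    Continuous (Psi G L κ s v) := by
  show Continuous fun t => univ.sup' univ_nonempty
    fun w => L w t - L v t - 2 * (s : ℝ) * κ * (G.dist v w)
  exact continuous_finset_sup'_aux univ_nonempty fun w =>
    (((hdiff w).continuous.sub (hdiff v).continuous).sub continuous_const)

lemma dpt_continuous (hdiff : ∀ v, Differentiable ℝ (L v)) (v : V) :
    Continuous (dpt G L κ s v) := by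
  show Continuous fun t => univ.sup' univ_nonempty
    fun z => L v t - L z t - (2 * (s : ℝ) - 1) * κ * (G.dist v z)
  exact continuous_finset_sup'_aux univ_nonempty fun z =>
    (((hdiff v).continuous.sub (hdiff z).continuous).sub continuous_const)

lemma psiMax_continuous (hdiff : ∀ v, Differentiable ℝ (L v)) :
    Continuous (PsiMax G L κ s) := by
  show Continuous fun t => univ.sup' univ_nonempty fun v => Psi G L κ s v t
  exact continuous_finset_sup'_aux univ_nonempty fun v => psi_continuous hdiff v

/-- level monotonicity: `Ψ^s ≤ Ψ^{s-1}` pointwise. -/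
lemma psiMax_le_pred (hκ : 0 < κ) (hs : 1 ≤ s) (t : ℝ) :
    PsiMax G L κ s t ≤ PsiMax G L κ (s - 1) t := by
  apply Finset.sup'_le
  intro v _
  apply le_trans _ (psi_le_psiMax (G := G) (L := L) (κ := κ) (s := s - 1) v t)
  apply Finset.sup'_le
  intro w _
  apply Finset.le_sup'_of_le _ (mem_univ w)
  have hcast : ((s - 1 : ℕ) : ℝ) = (s : ℝ) - 1 := by
    push_cast [Nat.cast_sub hs]
    ring
  rw [hcast]
  have hd : (0:ℝ) ≤ (G.dist v w : ℝ) := Nat.cast_nonneg _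
  nlinarith

lemma exists_adj_pred (hconn : G.Connected) {v w : V} (hne : v ≠ w) :
    ∃ x, G.Adj w x ∧ G.dist v x + 1 = G.dist v w := by
  obtain ⟨p, hp⟩ := hconn.exists_walk_length_eq_dist v w
  have hrev : p.reverse.length = G.dist v w := by
    rw [SimpleGraph.Walk.length_reverse]; exact hp
  rcases hq : p.reverse with _ | ⟨hadj, q⟩
  · exact absurd rfl hne.symm
  · rename_i x
    rw [hq] at hrev
    simp [SimpleGraph.Walk.length_cons] at hrev
    have h1 : G.dist x v ≤ q.length := SimpleGraph.dist_le q
    have h2 : G.dist v x ≤ q.length := by rw [SimpleGraph.dist_comm]; exact h1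
    have h3 : G.dist x w = 1 := SimpleGraph.dist_eq_one_iff_adj.mpr hadj.symm
    have h4 : G.dist v w ≤ G.dist v x + G.dist x w := hconn.dist_triangle
    refine ⟨x, hadj, ?_⟩
    omega

lemma dist_le_adj (hconn : G.Connected) {w y : V} (v : V) (hadj : G.Adj w y) :
    G.dist v y ≤ G.dist v w + 1 := by
  have h3 : G.dist w y = 1 := SimpleGraph.dist_eq_one_iff_adj.mpr hadj
  have h4 : G.dist v y ≤ G.dist v w + G.dist w y := hconn.dist_triangle
  omega

lemma deriv_atom (hdiff : ∀ v, Differentiable ℝ (L v)) (w z : V) (C : ℝ) (c : ℝ) :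
    deriv (fun u => L w u - L z u - C) c = deriv (L w) c - deriv (L z) c := by
  have h1 : DifferentiableAt ℝ (L w) c := (hdiff w) c
  have h2 : DifferentiableAt ℝ (L z) c := (hdiff z) c
  rw [deriv_fun_sub (h1.fun_sub h2) (differentiableAt_const _), deriv_fun_sub h1 h2, deriv_const]
  ring

/-- a maximizer (over `w`) of `Ψ_v^s` distinct from `v` satisfies the slow condition. -/
lemma slow_of_attain (hconn : G.Connected) (hκ : 0 < κ) {v w : V} {t : ℝ} (hne : w ≠ v)
    (hatt : ∀ u : V, L u t - L v t - 2 * (s : ℝ) * κ * (G.dist v u)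
      ≤ L w t - L v t - 2 * (s : ℝ) * κ * (G.dist v w)) :
    slowCond G L κ w t := by
  obtain ⟨x, hadj, hxd⟩ := exists_adj_pred hconn (hne.symm : v ≠ w)
  have hxdr : (G.dist v x : ℝ) + 1 = (G.dist v w : ℝ) := by exact_mod_cast hxd
  have hs0 : (0:ℝ) ≤ 2 * (s:ℝ) * κ := by positivity
  refine ⟨s, ⟨x, hadj, ?_⟩, ?_⟩
  · have h1 := hatt x
    have e : 2 * (s:ℝ) * κ * (G.dist v w) = 2 * (s:ℝ) * κ * (G.dist v x) + 2 * (s:ℝ) * κ := by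
      rw [← hxdr]; ring
    linarith
  · intro y hy
    have hyd : G.dist v y ≤ G.dist v w + 1 := dist_le_adj hconn v hy
    have hydr : (G.dist v y : ℝ) ≤ (G.dist v w : ℝ) + 1 := by exact_mod_cast hyd
    have h1 := hatt y
    have h2 : 2*(s:ℝ)*κ*(G.dist v y) ≤ 2*(s:ℝ)*κ*((G.dist v w : ℝ) + 1) :=
      mul_le_mul_of_nonneg_left hydr hs0
    have e : 2*(s:ℝ)*κ*((G.dist v w : ℝ) + 1) = 2*(s:ℝ)*κ*(G.dist v w) + 2*(s:ℝ)*κ := by ring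
    linarith

/-- a maximizer (over `z`) of the depth of `v` distinct from `v` satisfies the fast condition. -/
lemma fast_of_attain_dpt (hconn : G.Connected) (hκ : 0 < κ) (hs : 1 ≤ s)
    {v z : V} {t : ℝ} (hne : z ≠ v)
    (hatt : ∀ u : V, L v t - L u t - (2 * (s:ℝ) - 1) * κ * (G.dist v u)
      ≤ L v t - L z t - (2 * (s:ℝ) - 1) * κ * (G.dist v z)) :
    fastCond G L κ z t := by
  obtain ⟨x, hadj, hxd⟩ := exists_adj_pred hconn (hne.symm : v ≠ z)
  have hxdr : (G.dist v x : ℝ) + 1 = (G.dist v z : ℝ) := by exact_mod_cast hxd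
  have hsr : (1:ℝ) ≤ (s:ℝ) := by exact_mod_cast hs
  have hs0 : (0:ℝ) ≤ (2 * (s:ℝ) - 1) * κ := by nlinarith
  have hcast : ((s - 1 : ℕ) : ℝ) = (s : ℝ) - 1 := by
    push_cast [Nat.cast_sub hs]
    ring
  have hcoef : (2 * ((s - 1 : ℕ) : ℝ) + 1) * κ = (2 * (s:ℝ) - 1) * κ := by
    rw [hcast]; ring
  refine ⟨s - 1, ⟨x, hadj, ?_⟩, ?_⟩
  · rw [hcoef]
    have h1 := hatt x
    have e : (2*(s:ℝ)-1)*κ*(G.dist v z) = (2*(s:ℝ)-1)*κ*(G.dist v x) + (2*(s:ℝ)-1)*κ := by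
      rw [← hxdr]; ring
    linarith
  · intro y hy
    rw [hcoef]
    have hyd : G.dist v y ≤ G.dist v z + 1 := dist_le_adj hconn v hy
    have hydr : (G.dist v y : ℝ) ≤ (G.dist v z : ℝ) + 1 := by exact_mod_cast hyd
    have h1 := hatt y
    have h2 : (2*(s:ℝ)-1)*κ*(G.dist v y) ≤ (2*(s:ℝ)-1)*κ*((G.dist v z : ℝ) + 1) :=
      mul_le_mul_of_nonneg_left hydr hs0
    have e : (2*(s:ℝ)-1)*κ*((G.dist v z : ℝ) + 1)
        = (2*(s:ℝ)-1)*κ*(G.dist v z) + (2*(s:ℝ)-1)*κ := by ring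
    linarith

/-- the global maximizer of `Ψ^s`, if of zero depth, satisfies the fast condition. -/
lemma fast_of_argmax (hconn : G.Connected) (hκ : 0 < κ) (hs : 1 ≤ s) {v : V} {t : ℝ}
    (hpos : 0 < Psi G L κ s v t)
    (hmax : ∀ u, Psi G L κ s u t ≤ Psi G L κ s v t)
    (hdpt : dpt G L κ s v t ≤ 0) : fastCond G L κ v t := by
  obtain ⟨w, _, hw⟩ := Finset.exists_mem_eq_sup' univ_nonempty
    (fun w => L w t - L v t - 2 * (s : ℝ) * κ * (G.dist v w))
  -- hw : Psi v t = term w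
  have hwv : w ≠ v := by
    intro h
    rw [h] at hw
    have h0 : Psi G L κ s v t = 0 := by
      rw [show Psi G L κ s v t = L v t - L v t - 2 * (s : ℝ) * κ * (G.dist v v) from hw]
      simp [SimpleGraph.dist_self]
    linarith
  obtain ⟨x, hadjx, hxd⟩ := exists_adj_pred hconn (hwv : w ≠ v)
  -- hadjx : G.Adj v x, hxd : dist w x + 1 = dist w v
  have hsr : (1:ℝ) ≤ (s:ℝ) := by exact_mod_cast hs
  have hcast : ((s - 1 : ℕ) : ℝ) = (s : ℝ) - 1 := by
    push_cast [Nat.cast_sub hs]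
    ring
  have hcoef : (2 * ((s - 1 : ℕ) : ℝ) + 1) * κ = (2 * (s:ℝ) - 1) * κ := by
    rw [hcast]; ring
  refine ⟨s - 1, ⟨x, hadjx, ?_⟩, ?_⟩
  · rw [hcoef]
    -- term w in Psi x ≤ Psi x ≤ Psi v
    have h1 : L w t - L x t - 2 * (s:ℝ) * κ * (G.dist x w) ≤ Psi G L κ s x t :=
      Finset.le_sup' (fun w' => L w' t - L x t - 2 * (s : ℝ) * κ * (G.dist x w')) (mem_univ w)
    have h2 : Psi G L κ s x t ≤ Psi G L κ s v t := hmax x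
    have h3 : Psi G L κ s v t = L w t - L v t - 2 * (s:ℝ) * κ * (G.dist v w) := hw
    have hxw : (G.dist x w : ℝ) + 1 = (G.dist v w : ℝ) := by
      have e1 : G.dist x w = G.dist w x := SimpleGraph.dist_comm
      have e2 : G.dist v w = G.dist w v := SimpleGraph.dist_comm
      rw [e1, e2]
      exact_mod_cast hxd
    have e : 2 * (s:ℝ) * κ * (G.dist v w) = 2 * (s:ℝ) * κ * (G.dist x w) + 2 * (s:ℝ) * κ := by
      rw [← hxw]; ring
    -- L x − L v ≥ 2sκ ≥ (2s−1)κ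
    nlinarith
  · intro y hy
    rw [hcoef]
    have h1 : L v t - L y t - (2 * (s:ℝ) - 1) * κ * (G.dist v y) ≤ dpt G L κ s v t :=
      Finset.le_sup' (fun z => L v t - L z t - (2 * (s : ℝ) - 1) * κ * (G.dist v z)) (mem_univ y)
    have hdy : G.dist v y = 1 := SimpleGraph.dist_eq_one_iff_adj.mpr hy
    rw [hdy] at h1
    push_cast at h1
    linarith

/-- identification of the pairwise sup with `Ψ + depth`. -/
lemma ee_eq (v : V) (t : ℝ) :
    (univ.sup' univ_nonempty fun p : V × V =>
      L p.1 t - L p.2 t - (2*(s:ℝ)*κ*(G.dist v p.1) + (2*(s:ℝ)-1)*κ*(G.dist v p.2)))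
    = Psi G L κ s v t + dpt G L κ s v t := by
  apply le_antisymm
  · apply Finset.sup'_le
    rintro ⟨w, z⟩ _
    have h1 : L w t - L v t - 2*(s:ℝ)*κ*(G.dist v w) ≤ Psi G L κ s v t :=
      Finset.le_sup' (fun w' => L w' t - L v t - 2 * (s : ℝ) * κ * (G.dist v w')) (mem_univ w)
    have h2 : L v t - L z t - (2*(s:ℝ)-1)*κ*(G.dist v z) ≤ dpt G L κ s v t :=
      Finset.le_sup' (fun z' => L v t - L z' t - (2 * (s : ℝ) - 1) * κ * (G.dist v z'))
        (mem_univ z)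
    have e : L w t - L z t - (2*(s:ℝ)*κ*(G.dist v w) + (2*(s:ℝ)-1)*κ*(G.dist v z))
        = (L w t - L v t - 2*(s:ℝ)*κ*(G.dist v w))
          + (L v t - L z t - (2*(s:ℝ)-1)*κ*(G.dist v z)) := by ring
    rw [e]
    exact add_le_add h1 h2
  · obtain ⟨w, _, hw⟩ := Finset.exists_mem_eq_sup' univ_nonempty
      (fun w => L w t - L v t - 2 * (s : ℝ) * κ * (G.dist v w))
    obtain ⟨z, _, hz⟩ := Finset.exists_mem_eq_sup' univ_nonempty
      (fun z => L v t - L z t - (2 * (s : ℝ) - 1) * κ * (G.dist v z))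
    have hle := Finset.le_sup' (fun p : V × V =>
      L p.1 t - L p.2 t - (2*(s:ℝ)*κ*(G.dist v p.1) + (2*(s:ℝ)-1)*κ*(G.dist v p.2)))
      (mem_univ (w, z))
    have hP : Psi G L κ s v t = L w t - L v t - 2*(s:ℝ)*κ*(G.dist v w) := hw
    have hD : dpt G L κ s v t = L v t - L z t - (2*(s:ℝ)-1)*κ*(G.dist v z) := hz
    rw [hP, hD]
    refine le_trans (le_of_eq ?_) hle
    ring

/-- the combined potential is bounded by `ψ` (using the hypothesis on level `s-1`). -/
lemma ee_le_psi (hconn : G.Connected) (hκ : 0 < κ) (hs : 1 ≤ s) {ψ : ℝ}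
    (hψ : ∀ t, 0 ≤ t → PsiMax G L κ (s-1) t ≤ ψ) (v : V) {t : ℝ} (ht : 0 ≤ t) :
    Psi G L κ s v t + dpt G L κ s v t ≤ ψ := by
  obtain ⟨w, _, hw⟩ := Finset.exists_mem_eq_sup' univ_nonempty
    (fun w => L w t - L v t - 2 * (s : ℝ) * κ * (G.dist v w))
  obtain ⟨z, _, hz⟩ := Finset.exists_mem_eq_sup' univ_nonempty
    (fun z => L v t - L z t - (2 * (s : ℝ) - 1) * κ * (G.dist v z))
  have hP : Psi G L κ s v t = L w t - L v t - 2*(s:ℝ)*κ*(G.dist v w) := hw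
  have hD : dpt G L κ s v t = L v t - L z t - (2*(s:ℝ)-1)*κ*(G.dist v z) := hz
  rw [hP, hD]
  have hcast : ((s - 1 : ℕ) : ℝ) = (s : ℝ) - 1 := by
    push_cast [Nat.cast_sub hs]
    ring
  have hterm : L w t - L z t - 2*(((s - 1:ℕ)):ℝ)*κ*(G.dist z w) ≤ Psi G L κ (s-1) z t :=
    Finset.le_sup'
      (fun w' => L w' t - L z t - 2 * ((s - 1 : ℕ) : ℝ) * κ * (G.dist z w')) (mem_univ w)
  have hco : 2*(((s - 1:ℕ)):ℝ)*κ*(G.dist z w) = 2*((s:ℝ)-1)*κ*(G.dist z w) := by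
    rw [hcast]
  have hfin : Psi G L κ (s-1) z t ≤ ψ := le_trans (psi_le_psiMax z t) (hψ t ht)
  have htri : (G.dist z w : ℝ) ≤ (G.dist v z : ℝ) + (G.dist v w : ℝ) := by
    have h := hconn.dist_triangle (u := z) (v := v) (w := w)
    have hcomm : G.dist z v = G.dist v z := SimpleGraph.dist_comm
    rw [hcomm] at h
    exact_mod_cast h
  have hsr : (1:ℝ) ≤ (s:ℝ) := by exact_mod_cast hs
  have hd1 : (0:ℝ) ≤ (G.dist v w : ℝ) := Nat.cast_nonneg _
  have hd2 : (0:ℝ) ≤ (G.dist v z : ℝ) := Nat.cast_nonneg _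
  have hc0 : (0:ℝ) ≤ 2*((s:ℝ)-1)*κ := by nlinarith
  have e1 : 2*((s:ℝ)-1)*κ*(G.dist z w) ≤ 2*((s:ℝ)-1)*κ*((G.dist v z : ℝ) + (G.dist v w : ℝ)) :=
    mul_le_mul_of_nonneg_left htri hc0
  have hterm' : L w t - L z t - 2*((s:ℝ)-1)*κ*(G.dist z w) ≤ Psi G L κ (s-1) z t := by
    linarith [hterm, hco]
  have e2 : 2*((s:ℝ)-1)*κ*((G.dist v z : ℝ) + (G.dist v w : ℝ))
      ≤ 2*(s:ℝ)*κ*(G.dist v w) + (2*(s:ℝ)-1)*κ*(G.dist v z) := by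
    nlinarith [mul_nonneg hκ.le hd1, mul_nonneg hκ.le hd2]
  linarith [hterm', hfin, e1, e2]

lemma psi_att_ne {v w : V} {c : ℝ} (hpos : 0 < Psi G L κ s v c)
    (hatt : L w c - L v c - 2*(s:ℝ)*κ*(G.dist v w) = Psi G L κ s v c) : w ≠ v := by
  intro h
  rw [h] at hatt
  rw [SimpleGraph.dist_self] at hatt
  simp at hatt
  linarith

lemma dpt_att_ne {v z : V} {c : ℝ} (hpos : 0 < dpt G L κ s v c)
    (hatt : L v c - L z c - (2*(s:ℝ)-1)*κ*(G.dist v z) = dpt G L κ s v c) : z ≠ v := by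
  intro h
  rw [h] at hatt
  rw [SimpleGraph.dist_self] at hatt
  simp at hatt
  linarith

/-- growth estimate for `Ψ_v^s` (per node). -/
lemma psi_growth (hconn : G.Connected) (hκ : 0 < κ) (hρ : 0 < ρ)
    (hdiff : ∀ v, Differentiable ℝ (L v))
    (hrate : ∀ v u, 0 ≤ u → 1 ≤ deriv (L v) u ∧ deriv (L v) u ≤ (1 + μ) * (1 + ρ))
    (hslowI : ∀ v u, 0 ≤ u → slowCond G L κ v u → deriv (L v) u ≤ 1 + ρ)
    (v : V) {a b : ℝ} (ha : 0 ≤ a) (hab : a ≤ b) :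
    Psi G L κ s v b ≤ max (Psi G L κ s v a) 0 + ρ * (b - a) := by
  have hmain := sup'_crossing (fun (w : V) (u : ℝ) => L w u - L v u - 2*(s:ℝ)*κ*(G.dist v w))
    (fun w => ((hdiff w).sub (hdiff v)).sub (differentiable_const _))
    a b (max (Psi G L κ s v a) 0) ρ hab (le_max_left _ _) ?_
  · exact hmain
  · intro c hc hlt w hw
    have hw2 : L w c - L v c - 2 * (s : ℝ) * κ * (G.dist v w) = Psi G L κ s v c := hw
    have hlt2 : max (Psi G L κ s v a) 0 + ρ * (c - a) < Psi G L κ s v c := hlt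
    have hc0 : 0 ≤ c := ha.trans hc.1.le
    have hZ0 : (0:ℝ) ≤ max (Psi G L κ s v a) 0 + ρ * (c - a) := by
      have h1 : (0:ℝ) ≤ max (Psi G L κ s v a) 0 := le_max_right _ _
      have h2 : (0:ℝ) ≤ ρ * (c - a) := mul_nonneg hρ.le (by linarith [hc.1])
      linarith
    have hpos : 0 < Psi G L κ s v c := lt_of_le_of_lt hZ0 hlt2
    have hwv : w ≠ v := psi_att_ne hpos hw2
    have hatt : ∀ u : V, L u c - L v c - 2 * (s : ℝ) * κ * (G.dist v u)
        ≤ L w c - L v c - 2 * (s : ℝ) * κ * (G.dist v w) := by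
      intro u
      have h : L u c - L v c - 2 * (s : ℝ) * κ * (G.dist v u) ≤ Psi G L κ s v c :=
        Finset.le_sup'
          (fun w' => L w' c - L v c - 2 * (s : ℝ) * κ * (G.dist v w')) (mem_univ u)
      rw [hw2]
      exact h
    have hslow := slow_of_attain hconn hκ hwv hatt
    show deriv (fun u => L w u - L v u - 2 * (s : ℝ) * κ * (G.dist v w)) c ≤ ρ
    rw [deriv_atom hdiff w v _ c]
    have h1 := hslowI w c hc0 hslow
    have h2 := (hrate v c hc0).1
    linarith

/-- decay estimate for `Ψ_v^s + depth_v` on intervals where both parts are positive. -/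
lemma ee_decay (hconn : G.Connected) (hκ : 0 < κ) (hs : 1 ≤ s)
    (hdiff : ∀ v, Differentiable ℝ (L v))
    (hrate : ∀ v u, 0 ≤ u → 1 ≤ deriv (L v) u ∧ deriv (L v) u ≤ (1 + μ) * (1 + ρ))
    (hfastI : ∀ v u, 0 ≤ u → fastCond G L κ v u → 1 + μ ≤ deriv (L v) u)
    (hslowI : ∀ v u, 0 ≤ u → slowCond G L κ v u → deriv (L v) u ≤ 1 + ρ)
    (v : V) {a b : ℝ} (ha : 0 ≤ a) (hab : a ≤ b)
    (hgood : ∀ r ∈ Set.Ioo a b, 0 < Psi G L κ s v r ∧ 0 < dpt G L κ s v r) :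
    Psi G L κ s v b + dpt G L κ s v b
      ≤ (Psi G L κ s v a + dpt G L κ s v a) + (ρ - μ) * (b - a) := by
  have hmain := sup'_crossing (ι := V × V)
    (fun p u => L p.1 u - L p.2 u - (2*(s:ℝ)*κ*(G.dist v p.1) + (2*(s:ℝ)-1)*κ*(G.dist v p.2)))
    (fun p => ((hdiff p.1).sub (hdiff p.2)).sub (differentiable_const _))
    a b (Psi G L κ s v a + dpt G L κ s v a) (ρ - μ) hab (le_of_eq (ee_eq v a)) ?_
  · rw [ee_eq v b] at hmain
    exact hmain
  · intro c hc _ p hp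
    have hp2 : L p.1 c - L p.2 c
        - (2*(s:ℝ)*κ*(G.dist v p.1) + (2*(s:ℝ)-1)*κ*(G.dist v p.2))
        = (univ.sup' univ_nonempty fun q : V × V =>
          L q.1 c - L q.2 c - (2*(s:ℝ)*κ*(G.dist v q.1) + (2*(s:ℝ)-1)*κ*(G.dist v q.2))) := hp
    obtain ⟨hψpos, hdpos⟩ := hgood c hc
    have hc0 : 0 ≤ c := ha.trans hc.1.le
    have h1 : L p.1 c - L v c - 2*(s:ℝ)*κ*(G.dist v p.1) ≤ Psi G L κ s v c :=
      Finset.le_sup' (fun w' => L w' c - L v c - 2 * (s : ℝ) * κ * (G.dist v w')) (mem_univ p.1)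
    have h2 : L v c - L p.2 c - (2*(s:ℝ)-1)*κ*(G.dist v p.2) ≤ dpt G L κ s v c :=
      Finset.le_sup' (fun z' => L v c - L z' c - (2 * (s : ℝ) - 1) * κ * (G.dist v z'))
        (mem_univ p.2)
    have hsum : L p.1 c - L p.2 c - (2*(s:ℝ)*κ*(G.dist v p.1) + (2*(s:ℝ)-1)*κ*(G.dist v p.2))
        = (L p.1 c - L v c - 2*(s:ℝ)*κ*(G.dist v p.1))
          + (L v c - L p.2 c - (2*(s:ℝ)-1)*κ*(G.dist v p.2)) := by ring
    have hPeq : (univ.sup' univ_nonempty fun q : V × V =>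
        L q.1 c - L q.2 c - (2*(s:ℝ)*κ*(G.dist v q.1) + (2*(s:ℝ)-1)*κ*(G.dist v q.2)))
        = Psi G L κ s v c + dpt G L κ s v c := ee_eq v c
    have hp' : (L p.1 c - L v c - 2*(s:ℝ)*κ*(G.dist v p.1))
        + (L v c - L p.2 c - (2*(s:ℝ)-1)*κ*(G.dist v p.2))
        = Psi G L κ s v c + dpt G L κ s v c := by
      rw [← hsum, hp2, hPeq]
    have hw_att : L p.1 c - L v c - 2*(s:ℝ)*κ*(G.dist v p.1) = Psi G L κ s v c := by
      linarith
    have hz_att : L v c - L p.2 c - (2*(s:ℝ)-1)*κ*(G.dist v p.2) = dpt G L κ s v c := by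
      linarith
    have hwv : p.1 ≠ v := psi_att_ne hψpos hw_att
    have hzv : p.2 ≠ v := dpt_att_ne hdpos hz_att
    have hattw : ∀ u : V, L u c - L v c - 2 * (s : ℝ) * κ * (G.dist v u)
        ≤ L p.1 c - L v c - 2 * (s : ℝ) * κ * (G.dist v p.1) := by
      intro u
      rw [hw_att]
      exact Finset.le_sup'
        (fun w' => L w' c - L v c - 2 * (s : ℝ) * κ * (G.dist v w')) (mem_univ u)
    have hattz : ∀ u : V, L v c - L u c - (2 * (s:ℝ) - 1) * κ * (G.dist v u)
        ≤ L v c - L p.2 c - (2 * (s:ℝ) - 1) * κ * (G.dist v p.2) := by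
      intro u
      rw [hz_att]
      exact Finset.le_sup'
        (fun z' => L v c - L z' c - (2 * (s : ℝ) - 1) * κ * (G.dist v z')) (mem_univ u)
    have hslow := slow_of_attain hconn hκ hwv hattw
    have hfast := fast_of_attain_dpt hconn hκ hs hzv hattz
    show deriv (fun u => L p.1 u - L p.2 u
      - (2*(s:ℝ)*κ*(G.dist v p.1) + (2*(s:ℝ)-1)*κ*(G.dist v p.2))) c ≤ ρ - μ
    rw [deriv_atom hdiff p.1 p.2 _ c]
    have hd1 := hslowI p.1 c hc0 hslow
    have hd2 := hfastI p.2 c hc0 hfast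
    linarith

end MainAux

set_option maxHeartbeats 2000000 in
/-- bound on `Ψ^s` in terms of a uniform bound `ψ` on `Ψ^{s-1}`. -/
theorem stmt_13 [Fintype V] [Nonempty V] (G : SimpleGraph V) (hconn : G.Connected)
    (L : V → ℝ → ℝ) (κ ρ μ : ℝ) (hκ : 0 < κ) (hρ : 0 < ρ) (hρμ : ρ < μ)
    (hdiff : ∀ v, Differentiable ℝ (L v))
    (hrate : ∀ v u, 0 ≤ u → 1 ≤ deriv (L v) u ∧ deriv (L v) u ≤ (1 + μ) * (1 + ρ))
    (hfastI : ∀ v u, 0 ≤ u → fastCond G L κ v u → 1 + μ ≤ deriv (L v) u)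
    (hslowI : ∀ v u, 0 ≤ u → slowCond G L κ v u → deriv (L v) u ≤ 1 + ρ)
    (s : ℕ) (hs : 1 ≤ s) (ψ : ℝ) (hψ : ∀ t, 0 ≤ t → PsiMax G L κ (s - 1) t ≤ ψ) :
    (∀ t, 0 ≤ t → t ≤ ψ / μ → PsiMax G L κ s t ≤ PsiMax G L κ s 0 + ρ / μ * ψ) ∧
    (∀ t, ψ / μ < t → PsiMax G L κ s t ≤ ρ / μ * ψ) := by
  have hμ : 0 < μ := hρ.trans hρμ
  have hψ0 : 0 ≤ ψ := le_trans (psiMax_nonneg 0) (hψ 0 le_rfl)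
  have hgrow : ∀ a b : ℝ, 0 ≤ a → a ≤ b →
      PsiMax G L κ s b ≤ PsiMax G L κ s a + ρ * (b - a) := by
    intro a b ha hab
    apply Finset.sup'_le
    intro v _
    have h := psi_growth (s := s) hconn hκ hρ hdiff hrate hslowI v ha hab
    rw [max_eq_left (psi_nonneg v a)] at h
    exact h.trans (by linarith [psi_le_psiMax (G := G) (L := L) (κ := κ) (s := s) v a])
  constructor
  · intro t ht htb
    have h := hgrow 0 t le_rfl ht
    rw [sub_zero] at h
    have h2 : ρ * t ≤ ρ / μ * ψ := by
      calc ρ * t ≤ ρ * (ψ/μ) := mul_le_mul_of_nonneg_left htb hρ.le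
      _ = ρ / μ * ψ := by ring
    linarith
  · intro t₁ ht₁
    by_contra hcon
    push_neg at hcon
    have hψμ0 : 0 ≤ ψ / μ := by positivity
    have ht₁0 : 0 < t₁ := lt_of_le_of_lt hψμ0 ht₁
    obtain ⟨t₀, ht₀eq⟩ : ∃ x : ℝ, x = t₁ - ψ/μ := ⟨_, rfl⟩
    have ht₀pos : 0 < t₀ := by rw [ht₀eq]; linarith
    have ht₀t₁ : t₀ ≤ t₁ := by rw [ht₀eq]; linarith
    have hδ₀pos : 0 < PsiMax G L κ s t₁ - ρ/μ*ψ := by linarith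
    have hν : 0 < μ - ρ := by linarith
    obtain ⟨ε, hε, hεν, hεδ⟩ : ∃ ε : ℝ, 0 < ε ∧ ε < μ - ρ ∧
        ε * (ψ/μ) < PsiMax G L κ s t₁ - ρ/μ*ψ := by
      refine ⟨min ((μ-ρ)/2) ((PsiMax G L κ s t₁ - ρ/μ*ψ)/(ψ/μ+1)), ?_, ?_, ?_⟩
      · apply lt_min (by linarith)
        positivity
      · exact lt_of_le_of_lt (min_le_left _ _) (by linarith)
      · have h1 : min ((μ-ρ)/2) ((PsiMax G L κ s t₁ - ρ/μ*ψ)/(ψ/μ+1))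
            ≤ (PsiMax G L κ s t₁ - ρ/μ*ψ)/(ψ/μ+1) := min_le_right _ _
        calc min ((μ-ρ)/2) ((PsiMax G L κ s t₁ - ρ/μ*ψ)/(ψ/μ+1)) * (ψ/μ)
            ≤ (PsiMax G L κ s t₁ - ρ/μ*ψ)/(ψ/μ+1) * (ψ/μ) :=
              mul_le_mul_of_nonneg_right h1 hψμ0
        _ < PsiMax G L κ s t₁ - ρ/μ*ψ := by
            rw [div_mul_eq_mul_div, div_lt_iff₀ (by linarith)]
            nlinarith
    obtain ⟨ν', hν'eq⟩ : ∃ x : ℝ, x = μ - ρ - ε := ⟨_, rfl⟩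
    have hν'pos : 0 < ν' := by rw [hν'eq]; linarith
    have hν'le : ν' ≤ μ - ρ := by rw [hν'eq]; linarith
    -- the set S of "good" times
    obtain ⟨S, hSeq⟩ : ∃ X : Set ℝ, X = Set.Icc t₀ t₁ ∩
        {u | PsiMax G L κ s t₁ ≤ max (ρ/μ*ψ) (PsiMax G L κ s u - ν' * (t₁ - u))} := ⟨_, rfl⟩
    have ht₁S : t₁ ∈ S := by
      rw [hSeq]
      refine ⟨⟨ht₀t₁, le_rfl⟩, ?_⟩
      show PsiMax G L κ s t₁ ≤ max (ρ/μ*ψ) (PsiMax G L κ s t₁ - ν' * (t₁ - t₁))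
      exact le_max_of_le_right (le_of_eq (by ring))
    have hScl : IsClosed S := by
      rw [hSeq]
      apply IsClosed.inter isClosed_Icc
      apply isClosed_le continuous_const
      apply Continuous.max continuous_const
      exact (psiMax_continuous hdiff).sub (continuous_const.mul (continuous_const.sub continuous_id))
    have hSsub : S ⊆ Set.Icc t₀ t₁ := by rw [hSeq]; exact Set.inter_subset_left
    have hScp : IsCompact S := IsCompact.of_isClosed_subset isCompact_Icc hScl hSsub
    have hSbdd : BddBelow S := ⟨t₀, fun x hx => (hSsub hx).1⟩
    obtain ⟨c, hceq⟩ : ∃ x : ℝ, x = sInf S := ⟨_, rfl⟩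
    have hcS : c ∈ S := by rw [hceq]; exact hScp.sInf_mem ⟨t₁, ht₁S⟩
    have hcI : c ∈ Set.Icc t₀ t₁ := hSsub hcS
    have hc0 : 0 < c := lt_of_lt_of_le ht₀pos hcI.1
    have hct₁ : c ≤ t₁ := hcI.2
    have hcP : PsiMax G L κ s t₁ ≤ max (ρ/μ*ψ) (PsiMax G L κ s c - ν' * (t₁ - c)) := by
      have := hcS
      rw [hSeq] at this
      exact this.2
    rcases le_max_iff.mp hcP with hfin | hc2
    · linarith
    -- hc2 : PsiMax t₁ ≤ PsiMax c − ν'(t₁ − c)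
    have hΦcpos : 0 < PsiMax G L κ s c := by
      have h1 : 0 ≤ ν' * (t₁ - c) := mul_nonneg hν'pos.le (by linarith)
      have h2 : 0 ≤ ρ/μ*ψ := by positivity
      linarith
    have halg : ψ - (μ - ρ) * (ψ/μ) = ρ/μ*ψ := by
      field_simp
      ring
    have hexpand : ν' * (ψ/μ) = (μ-ρ)*(ψ/μ) - ε*(ψ/μ) := by rw [hν'eq]; ring
    have ht₁t₀ : t₁ - t₀ = ψ/μ := by rw [ht₀eq]; ring
    rcases eq_or_lt_of_le hcI.1 with hceqt₀ | hclt
    · -- c = t₀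
      have hΦc_le : PsiMax G L κ s c ≤ ψ :=
        le_trans (psiMax_le_pred hκ hs c) (hψ c hc0.le)
      have hd : ν' * (t₁ - c) = ν' * (ψ/μ) := by rw [← hceqt₀, ht₁t₀]
      linarith [hc2, hd, hexpand, halg, hεδ]
    · -- t₀ < c
      obtain ⟨v, _, hv0⟩ := Finset.exists_mem_eq_sup' univ_nonempty
        (fun v => Psi G L κ s v c)
      have hv : PsiMax G L κ s c = Psi G L κ s v c := hv0
      obtain ⟨A, hAeq⟩ : ∃ X : Set ℝ, X = Set.Icc t₀ c ∩
          {r | Psi G L κ s v r ≤ 0 ∨ dpt G L κ s v r ≤ 0} := ⟨_, rfl⟩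
      have hAcl : IsClosed A := by
        rw [hAeq]
        apply IsClosed.inter isClosed_Icc
        exact IsClosed.union (isClosed_le (psi_continuous hdiff v) continuous_const)
          (isClosed_le (dpt_continuous hdiff v) continuous_const)
      have hAsub : A ⊆ Set.Icc t₀ c := by rw [hAeq]; exact Set.inter_subset_left
      have hAcp : IsCompact A := IsCompact.of_isClosed_subset isCompact_Icc hAcl hAsub
      rcases A.eq_empty_or_nonempty with hAe | hAne
      · -- mixed on all of [t₀, c]
        have hgood : ∀ r ∈ Set.Ioo t₀ c, 0 < Psi G L κ s v r ∧ 0 < dpt G L κ s v r := by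
          intro r hr
          by_contra hbad
          have hmem : r ∈ A := by
            rw [hAeq]
            exact ⟨⟨hr.1.le, hr.2.le⟩, (not_and_or.mp hbad).imp not_lt.mp not_lt.mp⟩
          rw [hAe] at hmem
          exact hmem
        have hdec := ee_decay (s := s) hconn hκ hs hdiff hrate hfastI hslowI v ht₀pos.le hclt.le hgood
        have hE0 := ee_le_psi (s := s) hconn hκ hs hψ v ht₀pos.le
        have hΦc : PsiMax G L κ s c ≤ ψ + (ρ - μ)*(c - t₀) := by
          have hd0 := dpt_nonneg (G := G) (L := L) (κ := κ) (s := s) v c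
          linarith [hv, hdec, hE0]
        have hm1 : ν' * (c - t₀) ≤ (μ-ρ)*(c - t₀) :=
          mul_le_mul_of_nonneg_right hν'le (by linarith)
        have hsplit : ν' * (t₁ - t₀) = ν' * (t₁ - c) + ν' * (c - t₀) := by ring
        have hνψ : ν' * (t₁ - t₀) = ν' * (ψ/μ) := by rw [ht₁t₀]
        linarith [hc2, hΦc, hm1, hsplit, hνψ, hexpand, halg, hεδ]
      · -- there is a last "bad" time r'
        obtain ⟨r', hr'eq⟩ : ∃ x : ℝ, x = sSup A := ⟨_, rfl⟩
        have hr'A : r' ∈ A := by rw [hr'eq]; exact hAcp.sSup_mem hAne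
        have hr'I : r' ∈ Set.Icc t₀ c := hAsub hr'A
        have hr'0 : 0 < r' := lt_of_lt_of_le ht₀pos hr'I.1
        have hgood : ∀ r ∈ Set.Ioo r' c, 0 < Psi G L κ s v r ∧ 0 < dpt G L κ s v r := by
          intro r hr
          by_contra hbad
          have hmem : r ∈ A := by
            rw [hAeq]
            refine ⟨⟨le_trans hr'I.1 hr.1.le, hr.2.le⟩,
              (not_and_or.mp hbad).imp not_lt.mp not_lt.mp⟩
          have := le_csSup hAcp.bddAbove hmem
          rw [← hr'eq] at this
          exact absurd this (not_le.mpr hr.1)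
        have hdec := ee_decay (s := s) hconn hκ hs hdiff hrate hfastI hslowI v hr'0.le hr'I.2 hgood
        have hbad : Psi G L κ s v r' ≤ 0 ∨ dpt G L κ s v r' ≤ 0 := by
          have h := hr'A
          rw [hAeq] at h
          exact h.2
        rcases hbad with hψ0case | hdptcase
        · -- Ψ_v(r') = 0 : fresh catch-up
          have hg := psi_growth (s := s) hconn hκ hρ hdiff hrate hslowI v hr'0.le hr'I.2
          rw [max_eq_right hψ0case] at hg
          have hE := ee_le_psi (s := s) hconn hκ hs hψ v hr'0.le
          have hΦc1 : PsiMax G L κ s c ≤ ρ * (c - r') := by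
            rw [hv]; linarith
          have hΦc2 : PsiMax G L κ s c ≤ ψ + (ρ-μ)*(c - r') := by
            have hd0 := dpt_nonneg (G := G) (L := L) (κ := κ) (s := s) v c
            linarith [hv, hdec, hE]
          have hΦcβ : PsiMax G L κ s c ≤ ρ/μ*ψ := by
            rcases le_or_gt (ρ*(c-r')) (ρ/μ*ψ) with h | h
            · linarith
            · have hρψ : ρ * (ψ/μ) = ρ/μ*ψ := by ring
              have hτ : ψ/μ < c - r' := by
                rw [← hρψ] at h
                exact (mul_lt_mul_iff_right₀ hρ).mp h
              nlinarith [mul_lt_mul_of_pos_left hτ hν]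
          have h1 : 0 ≤ ν' * (t₁ - c) := mul_nonneg hν'pos.le (by linarith)
          linarith
        · -- depth_v(r') = 0
          rcases eq_or_lt_of_le hr'I.2 with hr'c | hr'c
          · -- r' = c : v is fast at c, step backwards
            have hdptc : dpt G L κ s v c ≤ 0 := by rw [← hr'c]; exact hdptcase
            have hposc : 0 < Psi G L κ s v c := by rw [← hv]; exact hΦcpos
            have hmaxc : ∀ u, Psi G L κ s u c ≤ Psi G L κ s v c := by
              intro u
              rw [← hv]
              exact psi_le_psiMax u c
            have hFC : fastCond G L κ v c := fast_of_argmax hconn hκ hs hposc hmaxc hdptc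
            obtain ⟨w, _, hw⟩ := Finset.exists_mem_eq_sup' univ_nonempty
              (fun w => L w c - L v c - 2*(s:ℝ)*κ*(G.dist v w))
            have hw' : L w c - L v c - 2*(s:ℝ)*κ*(G.dist v w) = Psi G L κ s v c := hw.symm
            have hwv : w ≠ v := psi_att_ne hposc hw'
            have hattw : ∀ u : V, L u c - L v c - 2 * (s : ℝ) * κ * (G.dist v u)
                ≤ L w c - L v c - 2 * (s : ℝ) * κ * (G.dist v w) := by
              intro u
              rw [hw']
              exact Finset.le_sup'
                (fun w' => L w' c - L v c - 2 * (s : ℝ) * κ * (G.dist v w')) (mem_univ u)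
            have hslow := slow_of_attain hconn hκ hwv hattw
            have hder : deriv (fun u => L w u - L v u - 2*(s:ℝ)*κ*(G.dist v w)) c ≤ ρ - μ := by
              rw [deriv_atom hdiff w v _ c]
              have hd1 := hslowI w c hc0.le hslow
              have hd2 := hfastI v c hc0.le hFC
              linarith
            have hdAt : HasDerivAt (fun u => L w u - L v u - 2*(s:ℝ)*κ*(G.dist v w))
                (deriv (fun u => L w u - L v u - 2*(s:ℝ)*κ*(G.dist v w)) c) c :=
              ((((hdiff w).sub (hdiff v)).sub (differentiable_const _)) c).hasDerivAt
            have hslope := hasDerivAt_iff_tendsto_slope.mp hdAt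
            have hmono : nhdsWithin c (Set.Iio c) ≤ nhdsWithin c {c}ᶜ :=
              nhdsWithin_mono c fun y hy => Set.mem_compl_singleton_iff.mpr (ne_of_lt hy)
            have hev1 : ∀ᶠ u in nhdsWithin c (Set.Iio c),
                slope (fun u => L w u - L v u - 2*(s:ℝ)*κ*(G.dist v w)) c u < -ν' := by
              apply (hslope.mono_left hmono).eventually_lt_const
              rw [hν'eq]
              linarith
            have hev3 : ∀ᶠ u in nhdsWithin c (Set.Iio c), t₀ < u := by
              have hIoo : Set.Ioo t₀ c ∈ nhdsWithin c (Set.Iio c) :=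
                Ioo_mem_nhdsLT_of_mem ⟨hclt, le_rfl⟩
              filter_upwards [hIoo] with u hu
              exact hu.1
            have hev2 : ∀ᶠ u in nhdsWithin c (Set.Iio c), u ∈ Set.Iio c :=
              eventually_mem_nhdsWithin
            haveI : (nhdsWithin c (Set.Iio c)).NeBot := by
              apply mem_closure_iff_nhdsWithin_neBot.mp
              rw [closure_Iio]
              exact Set.mem_Iic.mpr le_rfl
            obtain ⟨u, hu1, hu2, hu3⟩ := (hev1.and (hev2.and hev3)).exists
            have huc : u < c := hu2
            rw [slope_def_field] at hu1
            have hfu : (L w c - L v c - 2*(s:ℝ)*κ*(G.dist v w)) + ν' * (c - u)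
                ≤ L w u - L v u - 2*(s:ℝ)*κ*(G.dist v w) := by
              have hneg : u - c < 0 := by linarith
              have := (div_lt_iff_of_neg hneg).mp hu1
              nlinarith
            have hΨu : L w u - L v u - 2*(s:ℝ)*κ*(G.dist v w) ≤ PsiMax G L κ s u := by
              refine le_trans (Finset.le_sup'
                (fun w' => L w' u - L v u - 2 * (s : ℝ) * κ * (G.dist v w')) (mem_univ w)) ?_
              exact psi_le_psiMax v u
            have hΦu : PsiMax G L κ s c + ν' * (c - u) ≤ PsiMax G L κ s u := by
              linarith [hw', hv, hfu, hΨu]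
            have huS : u ∈ S := by
              rw [hSeq]
              refine ⟨⟨hu3.le, by linarith⟩, ?_⟩
              show PsiMax G L κ s t₁ ≤ max (ρ/μ*ψ) (PsiMax G L κ s u - ν' * (t₁ - u))
              apply le_max_of_le_right
              have hexp : ν' * (t₁ - u) = ν' * (t₁ - c) + ν' * (c - u) := by ring
              linarith
            have := csInf_le hSbdd huS
            rw [← hceq] at this
            exact absurd this (not_le.mpr huc)
          · -- r' < c
            have hE1 : Psi G L κ s v r' + dpt G L κ s v r' ≤ PsiMax G L κ s r' := by
              linarith [psi_le_psiMax (G := G) (L := L) (κ := κ) (s := s) v r', hdptcase]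
            have hΦc : PsiMax G L κ s c ≤ PsiMax G L κ s r' + (ρ-μ)*(c - r') := by
              have hd0 := dpt_nonneg (G := G) (L := L) (κ := κ) (s := s) v c
              linarith [hv, hdec, hE1]
            have hr'S : r' ∈ S := by
              rw [hSeq]
              refine ⟨⟨hr'I.1, le_trans hr'I.2 hct₁⟩, ?_⟩
              show PsiMax G L κ s t₁ ≤ max (ρ/μ*ψ) (PsiMax G L κ s r' - ν' * (t₁ - r'))
              apply le_max_of_le_right
              have hm2 : ν' * (c - r') ≤ (μ-ρ)*(c-r') :=
                mul_le_mul_of_nonneg_right hν'le (by linarith)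
              have hexp : ν' * (t₁ - r') = ν' * (t₁ - c) + ν' * (c - r') := by ring
              linarith
            have := csInf_le hSbdd hr'S
            rw [← hceq] at this
            exact absurd this (not_le.mpr hr'c)
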